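/- arXiv:1607.08195 — 2 statements merged into one kernel-verified Lean document; each statement's English description precedes it below -/
import Mathlib

section
/- If 𝒢 is a finite nonempty family of intervals with minimal homomorphism target parameter s = s(𝒢), then the independence number of 𝒢 satisfies α(𝒢) ≥ ⌊s/2⌋ + 1. -/
def AdjI (I J : ℝ × ℝ) : Prop :=
  ∃ x : ℝ, Set.Icc I.1 I.2 ∩ Set.Icc J.1 J.2 = {x}

def AdjN (p q : ℕ × ℕ) : Prop :=
  ∃ x : ℝ, Set.Icc (p.1 : ℝ) p.2 ∩ Set.Icc (q.1 : ℝ) q.2 = {x}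

def memIs (s : ℕ) (p : ℕ × ℕ) : Prop :=
  p = (0, 1) ∨ p = (s, s + 1) ∨ (1 ≤ p.1 ∧ p.1 < p.2 ∧ p.2 ≤ s)

lemma adjN_iff (p q : ℕ × ℕ) : AdjN p q ↔ max p.1 q.1 = min p.2 q.2 := by
  unfold AdjN
  constructor
  · rintro ⟨x, hx⟩
    rw [Set.Icc_inter_Icc, Set.Icc_eq_singleton_iff] at hx
    have h : ((max p.1 q.1 : ℕ) : ℝ) = ((min p.2 q.2 : ℕ) : ℝ) := by
      push_cast
      rw [hx.1, hx.2]
    exact_mod_cast h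
  · intro h
    refine ⟨(max p.1 q.1 : ℕ), ?_⟩
    rw [Set.Icc_inter_Icc, Set.Icc_eq_singleton_iff]
    constructor
    · push_cast; ring
    · rw [h]; push_cast; ring

/-- interior collapse map -/
def dmap (c : ℕ) (x : ℕ) : ℕ := if x ≤ c then x else x - 1

/-- bottom collapse endpoint map -/
def emap (x : ℕ) : ℕ := if x ≤ 1 then x else x - 1

/-- bottom collapse -/
def gbot (p : ℕ × ℕ) : ℕ × ℕ := if p.2 ≤ 2 then (0, 1) else (emap p.1, emap p.2)

/-- reflection -/
def rmap (s : ℕ) (p : ℕ × ℕ) : ℕ × ℕ := (s + 1 - p.2, s + 1 - p.1)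

lemma dmap_mem {s c : ℕ} (hc1 : 1 ≤ c) (hc2 : c + 1 ≤ s) {p : ℕ × ℕ}
    (hp : memIs s p) (hne : p ≠ (c, c + 1)) :
    memIs (s - 1) (dmap c p.1, dmap c p.2) := by
  have hne' : ¬ (p.1 = c ∧ p.2 = c + 1) := by
    intro h; exact hne (Prod.ext h.1 h.2)
  simp only [memIs, Prod.ext_iff] at hp ⊢
  simp only [dmap]
  split_ifs <;> omega

lemma dmap_adj {c : ℕ} {p q : ℕ × ℕ} (h : AdjN p q) :
    AdjN (dmap c p.1, dmap c p.2) (dmap c q.1, dmap c q.2) := by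
  rw [adjN_iff] at h ⊢
  simp only [dmap]
  split_ifs <;> omega

lemma gbot_mem {s : ℕ} (hs : 1 ≤ s) {p : ℕ × ℕ}
    (hp : memIs s p) (hne : p ≠ (0, 1)) : memIs (s - 1) (gbot p) := by
  have hne' : ¬ (p.1 = 0 ∧ p.2 = 1) := by
    intro h; exact hne (Prod.ext h.1 h.2)
  simp only [memIs, Prod.ext_iff] at hp ⊢
  simp only [gbot, emap]
  split_ifs <;> simp <;> omega

lemma gbot_adj {s : ℕ} {p q : ℕ × ℕ}
    (hp : memIs s p) (hpne : p ≠ (0, 1)) (hq : memIs s q) (hqne : q ≠ (0, 1))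
    (h : AdjN p q) : AdjN (gbot p) (gbot q) := by
  have hp' : ¬ (p.1 = 0 ∧ p.2 = 1) := fun h' => hpne (Prod.ext h'.1 h'.2)
  have hq' : ¬ (q.1 = 0 ∧ q.2 = 1) := fun h' => hqne (Prod.ext h'.1 h'.2)
  simp only [memIs, Prod.ext_iff] at hp hq
  have hb1 : 1 ≤ p.1 ∧ p.1 < p.2 := by omega
  have hb2 : 1 ≤ q.1 ∧ q.1 < q.2 := by omega
  rw [adjN_iff] at h ⊢
  simp only [gbot, emap]
  split_ifs <;> simp <;> omega

lemma rmap_mem {s : ℕ} {p : ℕ × ℕ} (hp : memIs s p) : memIs s (rmap s p) := by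
  simp only [memIs, Prod.ext_iff] at hp ⊢
  simp only [rmap]
  omega

lemma rmap_adj {s : ℕ} {p q : ℕ × ℕ} (hp : memIs s p) (hq : memIs s q)
    (h : AdjN p q) : AdjN (rmap s p) (rmap s q) := by
  simp only [memIs, Prod.ext_iff] at hp hq
  rw [adjN_iff] at h ⊢
  simp only [rmap]
  omega

lemma rmap_ne {s : ℕ} (hs : 1 ≤ s) {p : ℕ × ℕ} (hp : memIs s p)
    (hne : p ≠ (s, s + 1)) : rmap s p ≠ (0, 1) := by
  have hne' : ¬ (p.1 = s ∧ p.2 = s + 1) := fun h' => hne (Prod.ext h'.1 h'.2)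
  simp only [memIs, Prod.ext_iff] at hp
  simp only [rmap, Ne, Prod.ext_iff]
  omega

lemma keyB (G : Finset (ℝ × ℝ)) (hne : G.Nonempty) (s : ℕ)
    (f : ℝ × ℝ → ℕ × ℕ)
    (hmem : ∀ I ∈ G, memIs s (f I))
    (hadj : ∀ I ∈ G, ∀ J ∈ G, AdjI I J → AdjN (f I) (f J))
    (hmin : ∀ s' < s, ¬ ∃ g : ℝ × ℝ → ℕ × ℕ,
      (∀ I ∈ G, memIs s' (g I)) ∧
      (∀ I ∈ G, ∀ J ∈ G, AdjI I J → AdjN (g I) (g J)))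
    (c : ℕ) (hc : c ≤ s) : ∃ I, I ∈ G ∧ f I = (c, c + 1) := by
  by_contra hcon
  push_neg at hcon
  rcases Nat.eq_zero_or_pos s with hs | hs
  · subst hs
    obtain ⟨I, hI⟩ := hne
    have h1 := hmem I hI
    have h2 := hcon I hI
    have hc0 : c = 0 := by omega
    subst hc0
    simp only [memIs, Prod.ext_iff] at h1
    exact h2 (Prod.ext (by omega) (by omega))
  · apply hmin (s - 1) (by omega)
    rcases Nat.eq_zero_or_pos c with hc0 | hc1
    · -- bottom collapse
      subst hc0
      refine ⟨gbot ∘ f, fun I hI => ?_, fun I hI J hJ hIJ => ?_⟩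
      · exact gbot_mem hs (hmem I hI) (hcon I hI)
      · exact gbot_adj (hmem I hI) (hcon I hI) (hmem J hJ) (hcon J hJ)
          (hadj I hI J hJ hIJ)
    · rcases eq_or_lt_of_le hc with hcs | hcs
      · -- top collapse: reflect then bottom collapse
        subst hcs
        refine ⟨gbot ∘ rmap c ∘ f, fun I hI => ?_, fun I hI J hJ hIJ => ?_⟩
        · exact gbot_mem hc1 (rmap_mem (hmem I hI)) (rmap_ne hc1 (hmem I hI) (hcon I hI))
        · exact gbot_adj (rmap_mem (hmem I hI)) (rmap_ne hc1 (hmem I hI) (hcon I hI))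
            (rmap_mem (hmem J hJ)) (rmap_ne hc1 (hmem J hJ) (hcon J hJ))
            (rmap_adj (hmem I hI) (hmem J hJ) (hadj I hI J hJ hIJ))
      · -- interior collapse
        refine ⟨fun I => (dmap c (f I).1, dmap c (f I).2), fun I hI => ?_,
          fun I hI J hJ hIJ => ?_⟩
        · exact dmap_mem hc1 (by omega) (hmem I hI) (hcon I hI)
        · exact dmap_adj (hadj I hI J hJ hIJ)

/-- If s = s(𝒢) is the minimal parameter of a homomorphism target ℐ(s) for 𝒢, then
α(𝒢) ≥ ⌊s/2⌋ + 1. -/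
theorem stmt_10 (G : Finset (ℝ × ℝ)) (hne : G.Nonempty) (hpos : ∀ I ∈ G, I.1 < I.2)
    (s : ℕ)
    (hex : ∃ f : ℝ × ℝ → ℕ × ℕ,
      (∀ I ∈ G, memIs s (f I)) ∧
      (∀ I ∈ G, ∀ J ∈ G, AdjI I J → AdjN (f I) (f J)))
    (hmin : ∀ s' < s, ¬ ∃ g : ℝ × ℝ → ℕ × ℕ,
      (∀ I ∈ G, memIs s' (g I)) ∧
      (∀ I ∈ G, ∀ J ∈ G, AdjI I J → AdjN (g I) (g J))) :
    ∃ T ⊆ G, (∀ I ∈ T, ∀ J ∈ T, ¬ AdjI I J) ∧ s / 2 + 1 ≤ T.card := by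
  obtain ⟨f, hmem, hadj⟩ := hex
  have hB := keyB G hne s f hmem hadj hmin
  have hB' : ∀ k : ℕ, ∃ I, I ∈ G ∧ (k ≤ s / 2 → f I = (2 * k, 2 * k + 1)) := by
    intro k
    by_cases hk : k ≤ s / 2
    · obtain ⟨I, hI, hfI⟩ := hB (2 * k) (by omega)
      exact ⟨I, hI, fun _ => hfI⟩
    · exact ⟨hne.choose, hne.choose_spec, fun h => absurd h hk⟩
  choose pick hpickG hpickf using hB'
  refine ⟨(Finset.range (s / 2 + 1)).image pick, ?_, ?_, ?_⟩
  · intro I hI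
    simp only [Finset.mem_image] at hI
    obtain ⟨k, _, rfl⟩ := hI
    exact hpickG k
  · intro I hI J hJ hadjIJ
    simp only [Finset.mem_image, Finset.mem_range] at hI hJ
    obtain ⟨k, hk, rfl⟩ := hI
    obtain ⟨l, hl, rfl⟩ := hJ
    have h := hadj _ (hpickG k) _ (hpickG l) hadjIJ
    rw [hpickf k (by omega), hpickf l (by omega), adjN_iff] at h
    simp only at h
    omega
  · rw [Finset.card_image_of_injOn, Finset.card_range]
    intro k hk l hl hkl
    simp only [Finset.coe_range, Set.mem_Iio] at hk hl
    have h := congrArg f hkl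
    rw [hpickf k (by omega), hpickf l (by omega)] at h
    rw [Prod.ext_iff] at h
    simp only at h
    omega
end

section
/- Let γ = Σ k_I·I be a formal ℕ-combination of intervals from ℐ(s) (s ≥ 1). Then the independence number α(γ) of the multigraph expansion of γ equals the maximum over ε ∈ {0,1}^s of Σ_{I ∈ ℐ(s,ε)} k_I. -/
open scoped Classical

def memIsε (s : ℕ) (ε : ℕ → Bool) (p : ℕ × ℕ) : Prop :=
  (1 ≤ p.1 ∧ p.1 < p.2 ∧ p.2 ≤ s ∧ ε p.1 = false ∧ ε p.2 = true) ∨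
  (p = (0, 1) ∧ ε 1 = true) ∨ (p = (s, s + 1) ∧ ε s = false)

lemma memIs_lt {s : ℕ} {p : ℕ × ℕ} (h : memIs s p) : p.1 < p.2 := by
  rcases h with h | h | h
  · subst h; simp
  · subst h; simp
  · exact h.2.1

lemma memIsε_lt {s : ℕ} {ε : ℕ → Bool} {p : ℕ × ℕ} (h : memIsε s ε p) : p.1 < p.2 := by
  rcases h with h | h | h
  · exact h.2.1
  · rw [h.1]; simp
  · rw [h.1]; simp

lemma memIsε_fst_le {s : ℕ} {ε : ℕ → Bool} {p : ℕ × ℕ} (h : memIsε s ε p) : p.1 ≤ s := by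
  rcases h with h | h | h
  · omega
  · rw [h.1]; simp
  · rw [h.1]

lemma memIsε_right {s : ℕ} {ε : ℕ → Bool} {p : ℕ × ℕ} (hs : 1 ≤ s) (h : memIsε s ε p) :
    p = (s, s + 1) ∨ (p.2 ≤ s ∧ ε p.2 = true) := by
  rcases h with h | h | h
  · exact Or.inr ⟨h.2.2.1, h.2.2.2.2⟩
  · exact Or.inr ⟨by rw [h.1]; simpa using hs, by rw [h.1]; exact h.2⟩
  · exact Or.inl h.1

lemma memIsε_left {s : ℕ} {ε : ℕ → Bool} {p : ℕ × ℕ} (h : memIsε s ε p) :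
    p = (0, 1) ∨ ε p.1 = false := by
  rcases h with h | h | h
  · exact Or.inr h.2.2.2.1
  · exact Or.inl h.1
  · exact Or.inr (by rw [h.1]; exact h.2)

lemma adj_of_touch {p q : ℕ × ℕ} (hp : p.1 < p.2) (hq : q.1 < q.2) (h : p.2 = q.1) :
    AdjN p q := by
  refine ⟨(p.2 : ℝ), ?_⟩
  rw [Set.Icc_inter_Icc, ← Nat.cast_max, ← Nat.cast_min]
  have h1 : max p.1 q.1 = p.2 := by omega
  have h2 : min p.2 q.2 = p.2 := by omega
  rw [h1, h2, Set.Icc_self]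

lemma adj_touch {p q : ℕ × ℕ} (hp : p.1 < p.2) (hq : q.1 < q.2) (h : AdjN p q) :
    p.2 = q.1 ∨ q.2 = p.1 := by
  obtain ⟨x, hx⟩ := h
  rw [Set.Icc_inter_Icc, ← Nat.cast_max, ← Nat.cast_min, Set.Icc_eq_singleton_iff] at hx
  have : ((max p.1 q.1 : ℕ) : ℝ) = ((min p.2 q.2 : ℕ) : ℝ) := hx.1.trans hx.2.symm
  have h' : max p.1 q.1 = min p.2 q.2 := Nat.cast_injective this
  omega

lemma no_touch {s : ℕ} {ε : ℕ → Bool} {p q : ℕ × ℕ} (hs : 1 ≤ s)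
    (hp : memIsε s ε p) (hq : memIsε s ε q) : p.2 ≠ q.1 := by
  intro he
  have hq1 : q.1 ≤ s := memIsε_fst_le hq
  have hp2 : 1 ≤ p.2 := by have := memIsε_lt hp; omega
  rcases memIsε_right hs hp with h | ⟨h2s, htrue⟩
  · rw [h] at he; simp at he; omega
  · rcases memIsε_left hq with h | hfalse
    · rw [h] at he; simp at he; omega
    · rw [he, hfalse] at htrue; simp at htrue

/-- For a combination γ ∈ ℕℐ(s), the independence number α(γ) equals the maximum over
ε ∈ {0,1}^s of Σ_{I ∈ ℐ(s,ε)} k_I.  Expressed as: every independent sub-multiset of γ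
is bounded by one of these sums, and each such sum is attained by an independent
sub-multiset. -/
theorem stmt_12 (s : ℕ) (hs : 1 ≤ s) (γ : Multiset (ℕ × ℕ))
    (hγ : ∀ p ∈ γ, memIs s p) :
    (∀ t ≤ γ, (∀ p ∈ t, ∀ q ∈ t, ¬ AdjN p q) →
      ∃ ε : ℕ → Bool,
        Multiset.card t ≤ Multiset.card (γ.filter (fun p => memIsε s ε p))) ∧
    (∀ ε : ℕ → Bool, ∃ t ≤ γ, (∀ p ∈ t, ∀ q ∈ t, ¬ AdjN p q) ∧
      Multiset.card t = Multiset.card (γ.filter (fun p => memIsε s ε p))) := by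
  constructor
  · intro t ht hind
    refine ⟨fun i => decide (∃ p ∈ t, p.2 = i), ?_⟩
    have hmem : ∀ p ∈ t, memIs s p := fun p hp => hγ p (Multiset.mem_of_le ht hp)
    have hR : ∀ p ∈ t, ∀ q ∈ t, p.2 ≠ q.1 := by
      intro p hp q hq h
      exact hind p hp q hq (adj_of_touch (memIs_lt (hmem p hp)) (memIs_lt (hmem q hq)) h)
    refine Multiset.card_le_card (Multiset.le_filter.2 ⟨ht, ?_⟩)
    intro p hp
    rcases hmem p hp with h | h | h
    · refine Or.inr (Or.inl ⟨h, ?_⟩)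
      simp only [decide_eq_true_eq]
      exact ⟨p, hp, by rw [h]⟩
    · refine Or.inr (Or.inr ⟨h, ?_⟩)
      simp only [decide_eq_false_iff_not]
      rintro ⟨q, hq, hq2⟩
      exact hR q hq p hp (by rw [hq2, h])
    · refine Or.inl ⟨h.1, h.2.1, h.2.2, ?_, ?_⟩
      · simp only [decide_eq_false_iff_not]
        rintro ⟨q, hq, hq2⟩
        exact hR q hq p hp hq2
      · simp only [decide_eq_true_eq]
        exact ⟨p, hp, rfl⟩
  · intro ε
    refine ⟨γ.filter (fun p => memIsε s ε p), Multiset.filter_le _ _, ?_, rfl⟩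
    intro p hp q hq hadj
    have hp' := (Multiset.mem_filter.1 hp).2
    have hq' := (Multiset.mem_filter.1 hq).2
    rcases adj_touch (memIsε_lt hp') (memIsε_lt hq') hadj with h | h
    · exact no_touch hs hp' hq' h
    · exact no_touch hs hq' hp' h
end
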